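/- arXiv:math/0304478 — 2 statements merged into one kernel-verified Lean document; each statement's English description precedes it below -/
import Mathlib

section
/- For the map f: M(n,R) → ℕ ∪ {∞} defined by f(A) = dim_k(R^n / R^n A), where R^n A denotes the left R-submodule of R^n spanned by the rows resulting from right multiplication by A, one has f(AB) = f(A) + f(B) for all A, B ∈ M(n,R) (with the convention m + ∞ = ∞ + m = ∞). -/
/-- `R`, together with the embedding `ι : k →+* R` and the element `x : R`, is a
left skew polynomial ring `k[x; α, δ]`: `δ` is an `α`-derivation, the commutation
rule `x * a = α a * x + δ a` holds, and every element of `R` is uniquely a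
polynomial `a₀ + a₁ x + ⋯ + aₘ xᵐ` with coefficients in `k`. -/
structure IsSkewPolynomialRing (k R : Type*) [Field k] [Ring R]
    (α : k →+* k) (δ : k → k) (ι : k →+* R) (x : R) : Prop where
  delta_add : ∀ a b : k, δ (a + b) = δ a + δ b
  delta_mul : ∀ a b : k, δ (a * b) = δ a * α b + a * δ b
  commute_x : ∀ a : k, x * ι a = ι (α a) * x + ι (δ a)
  repr_bijective : Function.Bijective fun p : ℕ →₀ k => p.sum fun i a => ι a * x ^ i

/-- The degree of a (nonzero) element of the skew polynomial ring, read off from its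
unique representation as a polynomial in `x`. (Junk value `0` at `r = 0`.) -/
noncomputable def skewDeg {k R : Type*} [Field k] [Ring R] {α : k →+* k} {δ : k → k}
    {ι : k →+* R} {x : R} (h : IsSkewPolynomialRing k R α δ ι x) (r : R) : ℕ :=
  WithBot.unbotD 0 (((Equiv.ofBijective _ h.repr_bijective).symm r).support.max)

/-- `dim_k (Rⁿ / Rⁿ A) ∈ ℕ ∪ {∞}`: the `k`-dimension of the quotient of the space of
row vectors `Rⁿ` by the left `R`-submodule `Rⁿ A` spanned by the rows of `A`. -/
noncomputable def quotDim (k : Type*) {R : Type*} [Field k] [Ring R] (ι : k →+* R)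
    {n : ℕ} (A : Matrix (Fin n) (Fin n) R) : ℕ∞ :=
  letI : Module k ((Fin n → R) ⧸ Submodule.span R (Set.range fun i => A i)) :=
    Module.compHom _ ι
  Cardinal.toENat
    (Module.rank k ((Fin n → R) ⧸ Submodule.span R (Set.range fun i => A i)))

def kmod {k R : Type*} [Field k] [Ring R] (ι : k →+* R) (M : Type*) [AddCommGroup M] [Module R M] :
    Module k M := Module.compHom M ι

lemma toENat_mono' {a b : Cardinal} (hab : a ≤ b) :
    Cardinal.toENat a ≤ Cardinal.toENat b := Cardinal.enat_gc.monotone_u hab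

def toKLinear {k R : Type*} [Field k] [Ring R] (ι : k →+* R) {M N : Type*}
    [AddCommGroup M] [AddCommGroup N] [Module R M] [Module R N] (f : M →ₗ[R] N) :
    letI := kmod ι M; letI := kmod ι N; M →ₗ[k] N :=
  letI := kmod ι M; letI := kmod ι N
  { toFun := f, map_add' := f.map_add, map_smul' := fun c m => f.map_smul (ι c) m }

lemma toKLinear_apply {k R : Type*} [Field k] [Ring R] (ι : k →+* R) {M N : Type*}
    [AddCommGroup M] [AddCommGroup N] [Module R M] [Module R N] (f : M →ₗ[R] N) (m : M) :
    toKLinear ι f m = f m := rfl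

section
variable {k R : Type*} [Field k] [Ring R] {α : k →+* k} {δ : k → k}
    {ι : k →+* R} {x : R} (h : IsSkewPolynomialRing k R α δ ι x)

-- representation as a k-linear equiv
noncomputable def skewRepr : letI := kmod ι R; (ℕ →₀ k) ≃ₗ[k] R :=
  letI := kmod ι R
  { Equiv.ofBijective _ h.repr_bijective with
    map_add' := fun p q => by
      show ((p + q).sum fun i a => ι a * x ^ i) = _
      rw [Finsupp.sum_add_index (by simp) (by intros; rw [map_add, add_mul])]
      rfl
    map_smul' := fun c p => by
      show ((c • p).sum fun i a => ι a * x ^ i) = ι c * (p.sum fun i a => ι a * x ^ i)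
      rw [Finsupp.sum_smul_index (by simp), Finsupp.mul_sum]
      exact Finsupp.sum_congr fun i _ => by rw [map_mul, mul_assoc] }

lemma skewRepr_apply (p : ℕ →₀ k) : skewRepr h p = p.sum fun i a => ι a * x ^ i := rfl

lemma skewRepr_single (i : ℕ) (a : k) : skewRepr h (Finsupp.single i a) = ι a * x ^ i := by
  rw [skewRepr_apply, Finsupp.sum_single_index (by simp)]

lemma skewRepr_symm_pow (i : ℕ) :
    (skewRepr h).symm (x ^ i) = Finsupp.single i 1 := by
  letI := kmod ι R
  rw [LinearEquiv.symm_apply_eq, skewRepr_single, map_one, one_mul]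


/-- coefficient extraction as a k-linear map -/
noncomputable def coeffL (i : ℕ) : letI := kmod ι R; R →ₗ[k] k :=
  letI := kmod ι R
  (Finsupp.lapply i).comp (skewRepr h).symm.toLinearMap

lemma coeffL_apply (i : ℕ) (r : R) : coeffL h i r = (skewRepr h).symm r i := rfl

lemma coeffL_pow (i j : ℕ) : coeffL h i (x ^ j) = if j = i then 1 else 0 := by
  rw [coeffL_apply, skewRepr_symm_pow, Finsupp.single_apply]

lemma coeffL_iota_mul (i : ℕ) (a : k) (r : R) : coeffL h i (ι a * r) = a * coeffL h i r := by
  letI := kmod ι R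
  have : ι a * r = a • r := rfl
  rw [this, map_smul, smul_eq_mul]

/-- ball of degree ≤ d -/
noncomputable def ball (h : IsSkewPolynomialRing k R α δ ι x) (d : ℕ) : letI := kmod ι R; Submodule k R :=
  letI := kmod ι R
  Submodule.span k ((x ^ ·) '' Set.Iic d)

lemma sk_pow_mem_ball {i d : ℕ} (hid : i ≤ d) : x ^ i ∈ ball h d := by
  letI := kmod ι R
  exact Submodule.subset_span ⟨i, hid, rfl⟩

lemma sk_ball_mono {d d' : ℕ} (hd : d ≤ d') : ball h d ≤ ball h d' := by
  letI := kmod ι R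
  exact Submodule.span_mono (Set.image_mono (Set.Iic_subset_Iic.2 hd))

lemma sk_iota_mul_mem_ball {d : ℕ} (a : k) {r : R} (hr : r ∈ ball h d) : ι a * r ∈ ball h d := by
  letI := kmod ι R
  exact (ball h d).smul_mem a hr

lemma sk_coeffL_eq_zero_of_mem_ball {d i : ℕ} (hi : d < i) {r : R} (hr : r ∈ ball h d) :
    coeffL h i r = 0 := by
  letI := kmod ι R
  induction hr using Submodule.span_induction with
  | mem r hr =>
    obtain ⟨j, hj, rfl⟩ := hr
    rw [Set.mem_Iic] at hj
    rw [coeffL_pow, if_neg (by omega)]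
  | zero => rw [map_zero]
  | add r s _ _ hr hs => rw [map_add, hr, hs, add_zero]
  | smul a r _ hr => rw [map_smul, hr, smul_zero]

lemma sk_x_mul_mem_ball {d : ℕ} {r : R} (hr : r ∈ ball h d) : x * r ∈ ball h (d + 1) := by
  letI := kmod ι R
  induction hr using Submodule.span_induction with
  | mem r hr =>
    obtain ⟨j, hj, rfl⟩ := hr
    rw [Set.mem_Iic] at hj
    rw [← pow_succ']
    exact sk_pow_mem_ball h (by omega)
  | zero => rw [mul_zero]; exact Submodule.zero_mem _
  | add r s _ _ hr hs => rw [mul_add]; exact Submodule.add_mem _ hr hs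
  | smul a r hmem hr =>
    have : x * (a • r) = α a • (x * r) + δ a • r := by
      show x * (ι a * r) = ι (α a) * (x * r) + ι (δ a) * r
      rw [← mul_assoc, ← mul_assoc, h.commute_x, add_mul]
    rw [this]
    exact Submodule.add_mem _ (Submodule.smul_mem _ _ hr)
      (Submodule.smul_mem _ _ (sk_ball_mono h (by omega) hmem))

lemma sk_pow_mul_mem_ball {d : ℕ} (i : ℕ) {r : R} (hr : r ∈ ball h d) :
    x ^ i * r ∈ ball h (i + d) := by
  induction i with
  | zero => simpa using hr
  | succ i ih =>
    have : x ^ (i + 1) * r = x * (x ^ i * r) := by rw [pow_succ', mul_assoc]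
    rw [this]
    exact sk_ball_mono h (by omega) (sk_x_mul_mem_ball h ih)

lemma sk_mul_mem_ball {da db : ℕ} {a b : R} (ha : a ∈ ball h da) (hb : b ∈ ball h db) :
    a * b ∈ ball h (da + db) := by
  letI := kmod ι R
  induction ha using Submodule.span_induction with
  | mem a ha =>
    obtain ⟨j, hj, rfl⟩ := ha
    rw [Set.mem_Iic] at hj
    exact sk_ball_mono h (by omega) (sk_pow_mul_mem_ball h j hb)
  | zero => rw [zero_mul]; exact Submodule.zero_mem _
  | add r s _ _ hr hs => rw [add_mul]; exact Submodule.add_mem _ hr hs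
  | smul c r _ hr =>
    have : (c • r) * b = c • (r * b) := by
      show (ι c * r) * b = ι c * (r * b)
      rw [mul_assoc]
    rw [this]
    exact Submodule.smul_mem _ _ hr


lemma sk_coeffL_x_mul {e : ℕ} {r : R} (hr : r ∈ ball h e) :
    coeffL h (e + 1) (x * r) = α (coeffL h e r) := by
  letI := kmod ι R
  induction hr using Submodule.span_induction with
  | mem r hr =>
    obtain ⟨j, hj, rfl⟩ := hr
    rw [Set.mem_Iic] at hj
    rw [← pow_succ', coeffL_pow, coeffL_pow]
    by_cases hje : j = e
    · subst hje; simp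
    · rw [if_neg (by omega), if_neg (by omega), map_zero]
  | zero => rw [mul_zero, map_zero, map_zero, map_zero]
  | add r s _ _ hr hs => rw [mul_add, map_add, map_add, hr, hs, map_add]
  | smul a r hmem hr =>
    have hx : x * (a • r) = α a • (x * r) + δ a • r := by
      show x * (ι a * r) = ι (α a) * (x * r) + ι (δ a) * r
      rw [← mul_assoc, ← mul_assoc, h.commute_x, add_mul]
    rw [hx, map_add, map_smul, map_smul, smul_eq_mul, smul_eq_mul, hr,
      sk_coeffL_eq_zero_of_mem_ball h (show e < e + 1 by omega) hmem, mul_zero, add_zero,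
      map_smul, smul_eq_mul, map_mul]

lemma sk_coeffL_pow_mul (j : ℕ) {e : ℕ} {r : R} (hr : r ∈ ball h e) :
    coeffL h (j + e) (x ^ j * r) = (α ^ j) (coeffL h e r) := by
  induction j with
  | zero => rw [pow_zero, one_mul, pow_zero, zero_add]; rfl
  | succ j ih =>
    have hx : x ^ (j + 1) * r = x * (x ^ j * r) := by rw [pow_succ', mul_assoc]
    have he : j + 1 + e = (j + e) + 1 := by omega
    rw [hx, he, sk_coeffL_x_mul h (sk_pow_mul_mem_ball h j hr), ih, pow_succ',
      RingHom.mul_def, RingHom.comp_apply]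

lemma sk_coeffL_mul {da db : ℕ} {a b : R} (ha : a ∈ ball h da) (hb : b ∈ ball h db) :
    coeffL h (da + db) (a * b) = coeffL h da a * (α ^ da) (coeffL h db b) := by
  letI := kmod ι R
  induction ha using Submodule.span_induction with
  | mem a ha =>
    obtain ⟨j, hj, rfl⟩ := ha
    rw [Set.mem_Iic] at hj
    by_cases hje : j = da
    · subst hje
      rw [sk_coeffL_pow_mul h j hb, coeffL_pow, if_pos rfl, one_mul]
    · rw [sk_coeffL_eq_zero_of_mem_ball h (by omega)
        (sk_ball_mono h (by omega : j + db ≤ da + db - 1) (sk_pow_mul_mem_ball h j hb)),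
        coeffL_pow, if_neg hje, zero_mul]
  | zero => rw [zero_mul, map_zero, map_zero, zero_mul]
  | add r s _ _ hr hs => rw [add_mul, map_add, map_add, hr, hs, add_mul]
  | smul c r _ hr =>
    have hcr : (c • r) * b = c • (r * b) := mul_assoc (ι c) r b
    rw [hcr, map_smul, map_smul, smul_eq_mul, smul_eq_mul, hr, mul_assoc]

/-- degree with junk value 0 -/
noncomputable def skdeg (h : IsSkewPolynomialRing k R α δ ι x) (r : R) : ℕ :=
  WithBot.unbotD 0 (((skewRepr h).symm r).support.max)

lemma sk_mem_ball_gen {d : ℕ} {r : R} (hd : ∀ i ∈ ((skewRepr h).symm r).support, i ≤ d) :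
    r ∈ ball h d := by
  letI := kmod ι R
  have hr : r = skewRepr h ((skewRepr h).symm r) := (LinearEquiv.apply_symm_apply _ _).symm
  nth_rewrite 1 [hr]
  rw [skewRepr_apply]
  refine Submodule.sum_mem _ fun i hi => ?_
  have h1 : ι (((skewRepr h).symm r) i) * x ^ i = ((skewRepr h).symm r) i • x ^ i := rfl
  show (fun i a => ι a * x ^ i) i (((skewRepr h).symm r) i) ∈ ball h d
  simp only []
  rw [h1]
  exact Submodule.smul_mem _ _ (sk_pow_mem_ball h (hd i hi))

lemma sk_mem_ball_skdeg (r : R) : r ∈ ball h (skdeg h r) := by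
  refine sk_mem_ball_gen h fun i hi => ?_
  have hne : ((skewRepr h).symm r).support.Nonempty := ⟨i, hi⟩
  rw [skdeg, ← Finset.coe_max' hne, WithBot.unbotD_coe]
  exact Finset.le_max' _ _ hi

lemma sk_coeffL_skdeg_ne_zero {r : R} (hr : r ≠ 0) : coeffL h (skdeg h r) r ≠ 0 := by
  letI := kmod ι R
  have h0 : (skewRepr h).symm r ≠ 0 := fun hc => hr (by
    have := congrArg (skewRepr h) hc
    rwa [LinearEquiv.apply_symm_apply, map_zero] at this)
  have hne : ((skewRepr h).symm r).support.Nonempty := Finsupp.support_nonempty_iff.2 h0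
  rw [coeffL_apply, skdeg, ← Finset.coe_max' hne, WithBot.unbotD_coe, ← Finsupp.mem_support_iff]
  exact Finset.max'_mem _ _

include h in
lemma sk_mul_ne_zero {a b : R} (ha : a ≠ 0) (hb : b ≠ 0) : a * b ≠ 0 := by
  intro hab
  have hc := sk_coeffL_mul h (sk_mem_ball_skdeg h a) (sk_mem_ball_skdeg h b)
  rw [hab, map_zero] at hc
  exact mul_ne_zero (sk_coeffL_skdeg_ne_zero h ha)
    (fun hz => sk_coeffL_skdeg_ne_zero h hb (RingHom.injective (α ^ skdeg h a)
      (by rw [hz, map_zero]))) hc.symm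


section matrices
open Matrix
variable (ι) {n : ℕ}

lemma row_mul (A B : Matrix (Fin n) (Fin n) R) (i : Fin n) : (A * B) i = (A i) ᵥ* B := by
  funext j
  simp [Matrix.mul_apply, Matrix.vecMul, dotProduct]

lemma mem_span_rows {C : Matrix (Fin n) (Fin n) R} {v : Fin n → R} :
    v ∈ Submodule.span R (Set.range fun i => C i) ↔ ∃ w, w ᵥ* C = v := by
  rw [show (Set.range fun i => C i) = Set.range C.row from rfl, ← range_vecMulLinear]
  exact ⟨fun ⟨w, hw⟩ => ⟨w, hw⟩, fun ⟨w, hw⟩ => ⟨w, hw⟩⟩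

lemma quotDim_eq (C : Matrix (Fin n) (Fin n) R) :
    quotDim k ι C = Cardinal.toENat
      (@Module.rank k _ _ _ (kmod ι ((Fin n → R) ⧸ Submodule.span R (Set.range fun i => C i)))) :=
  rfl

theorem quotDim_mul_inj (A B : Matrix (Fin n) (Fin n) R)
    (hB : Function.Injective fun v : Fin n → R => v ᵥ* B) :
    quotDim k ι (A * B) = quotDim k ι A + quotDim k ι B := by
  classical
  set SA := Submodule.span R (Set.range fun i => A i) with hSA
  set SB := Submodule.span R (Set.range fun i => B i) with hSB
  set SAB := Submodule.span R (Set.range fun i => (A * B) i) with hSAB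
  have hSS : SAB ≤ SB := by
    rw [hSAB, Submodule.span_le]
    rintro _ ⟨i, rfl⟩
    show (A * B) i ∈ SB
    rw [hSB, mem_span_rows]
    exact ⟨A i, (row_mul A B i).symm⟩
  let π : ((Fin n → R) ⧸ SAB) →ₗ[R] ((Fin n → R) ⧸ SB) :=
    Submodule.mapQ SAB SB LinearMap.id (fun v hv => hSS hv)
  have hπmk : ∀ v : Fin n → R, π (Submodule.Quotient.mk v) = Submodule.Quotient.mk v :=
    fun v => Submodule.mapQ_apply SAB SB LinearMap.id v
  have hπsurj : Function.Surjective π := by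
    intro q
    obtain ⟨v, rfl⟩ := Submodule.Quotient.mk_surjective SB q
    exact ⟨Submodule.Quotient.mk v, hπmk v⟩
  let φ : (Fin n → R) →ₗ[R] ((Fin n → R) ⧸ SAB) := SAB.mkQ.comp (Matrix.vecMulLinear B)
  have hφSA : SA ≤ LinearMap.ker φ := by
    rw [hSA, Submodule.span_le]
    rintro _ ⟨i, rfl⟩
    show Submodule.Quotient.mk ((A i) ᵥ* B) = 0
    rw [Submodule.Quotient.mk_eq_zero, ← row_mul]
    exact Submodule.subset_span ⟨i, rfl⟩
  let Φ : ((Fin n → R) ⧸ SA) →ₗ[R] ((Fin n → R) ⧸ SAB) := SA.liftQ φ hφSA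
  have hΦmk : ∀ v : Fin n → R, Φ (Submodule.Quotient.mk v) = Submodule.Quotient.mk (v ᵥ* B) :=
    fun v => rfl
  have hΦinj : Function.Injective Φ := by
    rw [← LinearMap.ker_eq_bot, Submodule.ker_liftQ, Submodule.eq_bot_iff]
    rintro q hq
    obtain ⟨v, hv, rfl⟩ := hq
    have hvB : v ᵥ* B ∈ SAB := by
      rw [← Submodule.Quotient.mk_eq_zero]
      exact hv
    rw [hSAB, mem_span_rows] at hvB
    obtain ⟨w, hw⟩ := hvB
    rw [← Matrix.vecMul_vecMul] at hw
    have hv' : v = w ᵥ* A := (hB hw).symm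
    show SA.mkQ v = 0
    rw [Submodule.mkQ_apply, Submodule.Quotient.mk_eq_zero, hv', hSA, mem_span_rows]
    exact ⟨w, rfl⟩
  have hker : ∀ q, π q = 0 ↔ ∃ y, Φ y = q := by
    intro q
    obtain ⟨v, rfl⟩ := Submodule.Quotient.mk_surjective SAB q
    rw [hπmk v]
    constructor
    · intro hv
      rw [Submodule.Quotient.mk_eq_zero, hSB, mem_span_rows] at hv
      obtain ⟨w, hw⟩ := hv
      exact ⟨Submodule.Quotient.mk w, by rw [hΦmk, hw]⟩
    · rintro ⟨y, hy⟩
      obtain ⟨w, rfl⟩ := Submodule.Quotient.mk_surjective SA y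
      rw [hΦmk] at hy
      rw [Submodule.Quotient.mk_eq_zero]
      have h1 : (w ᵥ* B) - v ∈ SB := hSS ((Submodule.Quotient.eq SAB).1 hy)
      have h2 : (w ᵥ* B) ∈ SB := by rw [hSB, mem_span_rows]; exact ⟨w, rfl⟩
      have h3 := Submodule.sub_mem SB h2 h1
      simpa using h3
  letI := kmod ι ((Fin n → R) ⧸ SAB)
  letI := kmod ι ((Fin n → R) ⧸ SA)
  letI := kmod ι ((Fin n → R) ⧸ SB)
  let πk := toKLinear ι π
  let Φk := toKLinear ι Φ
  have e1 : Module.rank k ↥(LinearMap.range πk) + Module.rank k ↥(LinearMap.ker πk)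
      = Module.rank k ((Fin n → R) ⧸ SAB) := LinearMap.rank_range_add_rank_ker πk
  have e2 : Module.rank k ↥(LinearMap.range πk) = Module.rank k ((Fin n → R) ⧸ SB) :=
    rank_range_of_surjective πk hπsurj
  have e3 : LinearMap.ker πk = LinearMap.range Φk := by
    ext q
    rw [LinearMap.mem_ker, LinearMap.mem_range]
    exact hker q
  have e4 : Module.rank k ((Fin n → R) ⧸ SA) = Module.rank k ↥(LinearMap.range Φk) :=
    (LinearEquiv.ofInjective Φk hΦinj).rank_eq
  have e5 : Module.rank k ((Fin n → R) ⧸ SAB)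
      = Module.rank k ((Fin n → R) ⧸ SB) + Module.rank k ((Fin n → R) ⧸ SA) := by
    rw [← e1, e2, e3, e4]
  rw [quotDim_eq, quotDim_eq, quotDim_eq, ← hSA, ← hSB, ← hSAB]
  show Cardinal.toENat (Module.rank k ((Fin n → R) ⧸ SAB)) = _
  rw [e5, map_add, add_comm]

theorem quotDim_le_mul (A B : Matrix (Fin n) (Fin n) R) :
    quotDim k ι B ≤ quotDim k ι (A * B) := by
  classical
  set SB := Submodule.span R (Set.range fun i => B i) with hSB
  set SAB := Submodule.span R (Set.range fun i => (A * B) i) with hSAB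
  have hSS : SAB ≤ SB := by
    rw [hSAB, Submodule.span_le]
    rintro _ ⟨i, rfl⟩
    show (A * B) i ∈ SB
    rw [hSB, mem_span_rows]
    exact ⟨A i, (row_mul A B i).symm⟩
  let π : ((Fin n → R) ⧸ SAB) →ₗ[R] ((Fin n → R) ⧸ SB) :=
    Submodule.mapQ SAB SB LinearMap.id (fun v hv => hSS hv)
  have hπsurj : Function.Surjective π := by
    intro q
    obtain ⟨v, rfl⟩ := Submodule.Quotient.mk_surjective SB q
    exact ⟨Submodule.Quotient.mk v, Submodule.mapQ_apply SAB SB LinearMap.id v⟩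
  letI := kmod ι ((Fin n → R) ⧸ SAB)
  letI := kmod ι ((Fin n → R) ⧸ SB)
  have hle : Module.rank k ((Fin n → R) ⧸ SB) ≤ Module.rank k ((Fin n → R) ⧸ SAB) :=
    LinearMap.rank_le_of_surjective (toKLinear ι π) hπsurj
  rw [quotDim_eq, quotDim_eq, ← hSB, ← hSAB]
  exact Cardinal.toENat.monotone' hle

end matrices

section infinite
open Matrix
variable (ι) {n : ℕ}

include h in
theorem quotDim_eq_top_of_left_dep (C : Matrix (Fin n) (Fin n) R)
    {u : Fin n → R} (hu : u ≠ 0) (huC : u ᵥ* C = 0) : quotDim k ι C = ⊤ := by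
  classical
  by_contra hfin
  set SC := Submodule.span R (Set.range fun i => C i) with hSC
  letI := kmod ι ((Fin n → R) ⧸ SC)
  letI := kmod ι R
  letI := kmod ι (Fin n → R)
  have hrank : Module.rank k ((Fin n → R) ⧸ SC) < Cardinal.aleph0 := by
    rw [quotDim_eq, ← hSC] at hfin
    by_contra hge
    push_neg at hge
    exact hfin (Cardinal.toENat_eq_top.2 hge)
  -- Step A : torsion
  have torsion : ∀ j : Fin n, ∃ p : R, p ≠ 0 ∧ p • (Pi.single j 1 : Fin n → R) ∈ SC := by
    intro j
    set m : (Fin n → R) ⧸ SC := Submodule.Quotient.mk (Pi.single j 1) with hm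
    have hnli : ¬ LinearIndependent k (fun i : ℕ => (x ^ i) • m) := by
      intro hli
      have h2 : Cardinal.aleph0 ≤ Module.rank k ((Fin n → R) ⧸ SC) := by
        simpa using hli.cardinal_lift_le_rank
      exact absurd h2 (not_le.2 hrank)
    rw [linearIndependent_iff'] at hnli
    push_neg at hnli
    obtain ⟨s, g, hsum, i₀, hi₀s, hgi₀⟩ := hnli
    refine ⟨∑ i ∈ s, ι (g i) * x ^ i, ?_, ?_⟩
    · intro hp
      have hc : coeffL h i₀ (∑ i ∈ s, ι (g i) * x ^ i) = g i₀ := by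
        rw [map_sum, Finset.sum_eq_single i₀]
        · rw [coeffL_iota_mul, coeffL_pow, if_pos rfl, mul_one]
        · intro i his hne
          rw [coeffL_iota_mul, coeffL_pow, if_neg hne, mul_zero]
        · intro habs; exact absurd hi₀s habs
      rw [hp, map_zero] at hc
      exact hgi₀ hc.symm
    · rw [← Submodule.Quotient.mk_eq_zero, Submodule.Quotient.mk_smul]
      have hps : (∑ i ∈ s, ι (g i) * x ^ i) • m = ∑ i ∈ s, g i • ((x ^ i) • m) := by
        rw [Finset.sum_smul]
        refine Finset.sum_congr rfl fun i hi => ?_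
        rw [mul_smul]
        rfl
      rw [← hm, hps, hsum]
  -- Step B : common denominators
  have hWP : ∀ j : Fin n, ∃ q : (Fin n → R) × R, q.2 ≠ 0 ∧ q.1 ᵥ* C = q.2 • (Pi.single j 1 : Fin n → R) := by
    intro j
    obtain ⟨p, hp, hmem⟩ := torsion j
    rw [hSC, mem_span_rows] at hmem
    obtain ⟨wv, hwv⟩ := hmem
    exact ⟨(wv, p), hp, hwv⟩
  choose q hq1 hq2 using hWP
  set W : Matrix (Fin n) (Fin n) R := fun j => (q j).1 with hWdef
  set p : Fin n → R := fun j => (q j).2 with hpdef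
  -- degree bound
  set D : ℕ := (Finset.univ.sup fun lj : Fin n × Fin n => skdeg h (W lj.1 lj.2)) ⊔
      (Finset.univ.sup fun j => skdeg h (u j)) with hD
  have hWball : ∀ l j, W l j ∈ ball h D := fun l j =>
    sk_ball_mono h (le_trans (Finset.le_sup (Finset.mem_univ (l, j))) le_sup_left)
      (sk_mem_ball_skdeg h _)
  have huball : ∀ j, u j ∈ ball h D := fun j =>
    sk_ball_mono h (le_trans (Finset.le_sup (Finset.mem_univ j)) le_sup_right)
      (sk_mem_ball_skdeg h _)
  set e : ℕ := n * D with he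
  -- the test linear map
  set η : (((Fin n ⊕ Unit) × Fin (e + 1)) → k) → (Fin n ⊕ Unit) → R :=
    fun c q' => ∑ i : Fin (e + 1), ι (c (q', i)) * x ^ (i : ℕ) with hηdef
  have hη_add : ∀ c c' q', η (c + c') q' = η c q' + η c' q' := fun c c' q' => by
    rw [hηdef]
    simp [map_add, add_mul, Finset.sum_add_distrib]
  have hη_smul : ∀ (a : k) c q', η (a • c) q' = ι a * η c q' := fun a c q' => by
    rw [hηdef]
    simp [_root_.map_mul, mul_assoc, Finset.mul_sum]
  let Ψ : ((((Fin n ⊕ Unit) × Fin (e + 1)) → k)) →ₗ[k] (Fin n → R) :=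
    { toFun := fun c => (fun j => η c (Sum.inl j)) ᵥ* W + (η c (Sum.inr ())) • u
      map_add' := fun c c' => by
        show (fun j => η (c + c') (Sum.inl j)) ᵥ* W + (η (c + c') (Sum.inr ())) • u
          = ((fun j => η c (Sum.inl j)) ᵥ* W + (η c (Sum.inr ())) • u)
          + ((fun j => η c' (Sum.inl j)) ᵥ* W + (η c' (Sum.inr ())) • u)
        rw [show (fun j => η (c + c') (Sum.inl j))
            = (fun j => η c (Sum.inl j)) + (fun j => η c' (Sum.inl j)) from
          funext fun j => hη_add c c' _, Matrix.add_vecMul, hη_add, add_smul]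
        abel
      map_smul' := fun a c => by
        show (fun j => η (a • c) (Sum.inl j)) ᵥ* W + (η (a • c) (Sum.inr ())) • u
          = ι a • ((fun j => η c (Sum.inl j)) ᵥ* W + (η c (Sum.inr ())) • u)
        rw [show (fun j => η (a • c) (Sum.inl j)) = ι a • (fun j => η c (Sum.inl j)) from
          funext fun j => hη_smul a c _, hη_smul, smul_add]
        congr 1
        · exact (Matrix.vecMulLinear W).map_smul (ι a) _
        · rw [mul_smul] }
  have hΨ : ∀ c, Ψ c = (fun j => η c (Sum.inl j)) ᵥ* W + (η c (Sum.inr ())) • u := fun c => rfl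
  have hηball : ∀ c q', η c q' ∈ ball h e := by
    intro c q'
    rw [hηdef]
    refine Submodule.sum_mem _ fun i _ => ?_
    have h1 : ι (c (q', i)) * x ^ (i : ℕ) = c (q', i) • x ^ (i : ℕ) := rfl
    rw [h1]
    exact Submodule.smul_mem _ _ (sk_pow_mem_ball h (Nat.lt_succ_iff.1 i.isLt))
  -- target submodule
  set T : Submodule k (Fin n → R) :=
    Submodule.span k (Set.range fun q' : Fin n × Fin (e + D + 1) => Pi.single q'.1 (x ^ (q'.2 : ℕ)))
    with hT
  have hsingleT : ∀ (j : Fin n) {r : R}, r ∈ ball h (e + D) → Pi.single j r ∈ T := by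
    intro j r hr
    induction hr using Submodule.span_induction with
    | mem r hr =>
      obtain ⟨i, hi, rfl⟩ := hr
      rw [Set.mem_Iic] at hi
      exact Submodule.subset_span ⟨(j, ⟨i, by omega⟩), rfl⟩
    | zero => rw [Pi.single_zero]; exact T.zero_mem
    | add r s _ _ hr hs => rw [Pi.single_add]; exact T.add_mem hr hs
    | smul a r _ hr =>
      have h1 : (a • r : R) = ι a • r := rfl
      rw [h1, Pi.single_smul]
      exact T.smul_mem a hr
  have hΨT : ∀ c, Ψ c ∈ T := by
    intro c
    have hcomp : ∀ j, Ψ c j ∈ ball h (e + D) := by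
      intro j
      have h1 : Ψ c j = (∑ l, η c (Sum.inl l) * W l j) + η c (Sum.inr ()) * u j := by
        rw [hΨ]
        simp [Matrix.vecMul, dotProduct]
      rw [h1]
      exact Submodule.add_mem _
        (Submodule.sum_mem _ fun l _ => sk_mul_mem_ball h (hηball c _) (hWball l j))
        (sk_mul_mem_ball h (hηball c _) (huball j))
    have hdecomp : Ψ c = ∑ j, Pi.single j (Ψ c j) := by
      funext l
      rw [Finset.sum_apply]
      simp [Pi.single_apply]
    rw [hdecomp]
    exact Submodule.sum_mem _ fun j _ => hsingleT j (hcomp j)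
  -- injectivity
  have hcoefsum : ∀ (c : ((Fin n ⊕ Unit) × Fin (e + 1)) → k) q', η c q' = 0 →
      ∀ i' : Fin (e + 1), c (q', i') = 0 := by
    intro c q' hq' i'
    have h8 : coeffL h (i' : ℕ) (η c q') = c (q', i') := by
      rw [hηdef]
      simp only []
      rw [map_sum, Finset.sum_eq_single i']
      · rw [coeffL_iota_mul, coeffL_pow, if_pos rfl, mul_one]
      · intro i his hne
        rw [coeffL_iota_mul, coeffL_pow, if_neg (fun hh => hne (Fin.ext hh)), mul_zero]
      · intro habs; exact absurd (Finset.mem_univ i') habs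
    rw [hq', map_zero] at h8
    exact h8.symm
  obtain ⟨j₀, hj₀⟩ : ∃ j₀, u j₀ ≠ 0 := Function.ne_iff.1 hu
  have hΨinj0 : ∀ c, Ψ c = 0 → c = 0 := by
    intro c hc
    rw [hΨ] at hc
    set v : Fin n → R := fun j => η c (Sum.inl j) with hv
    set ρ : R := η c (Sum.inr ()) with hρ
    have h0 : (v ᵥ* W + ρ • u) ᵥ* C = 0 := by rw [hc, Matrix.zero_vecMul]
    rw [Matrix.add_vecMul] at h0
    have h2 : (ρ • u) ᵥ* C = 0 := by
      have h2a : (ρ • u) ᵥ* C = Matrix.vecMulLinear C (ρ • u) := rfl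
      rw [h2a, (Matrix.vecMulLinear C).map_smul ρ u, Matrix.vecMulLinear_apply, huC, smul_zero]
    rw [h2, add_zero, Matrix.vecMul_vecMul] at h0
    have h6 : ∀ l, (W * C) l = p l • (Pi.single l (1 : R) : Fin n → R) := by
      intro l
      rw [row_mul W C l]
      exact hq2 l
    have h3 : ∀ j, v j * p j = 0 := by
      intro j
      have h4 := congrFun h0 j
      have h5 : (v ᵥ* (W * C)) j = ∑ l, v l * ((p l • (Pi.single l (1 : R) : Fin n → R)) j) := by
        simp only [Matrix.vecMul, dotProduct]
        exact Finset.sum_congr rfl fun l _ => by rw [h6 l]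
      rw [h5] at h4
      have h5b : ∀ l, v l * ((p l • (Pi.single l (1 : R) : Fin n → R)) j)
          = if j = l then v l * p l else 0 := by
        intro l
        rw [Pi.smul_apply, Pi.single_apply, smul_eq_mul]
        by_cases hjl : j = l
        · rw [if_pos hjl, if_pos hjl, mul_one]
        · rw [if_neg hjl, if_neg hjl, mul_zero, mul_zero]
      rw [Finset.sum_congr rfl fun l _ => h5b l, Finset.sum_ite_eq Finset.univ j
        (fun l => v l * p l), if_pos (Finset.mem_univ j)] at h4
      exact h4
    have h6 : v = 0 := by
      funext j
      by_contra hvj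
      exact sk_mul_ne_zero h hvj (hq1 j) (h3 j)
    have h7 : ρ • u = 0 := by
      rw [h6, Matrix.zero_vecMul, zero_add] at hc
      exact hc
    have hρ0 : ρ = 0 := by
      by_contra hρne
      have := congrFun h7 j₀
      exact sk_mul_ne_zero h hρne hj₀ (by simpa using this)
    funext qi
    obtain ⟨q', i'⟩ := qi
    cases q' with
    | inl j => exact hcoefsum c _ (congrFun h6 j) i'
    | inr uu =>
      cases uu
      exact hcoefsum c _ hρ0 i'
  have hΨinj : Function.Injective Ψ := by
    intro c c' hcc
    have := hΨinj0 (c - c') (by rw [map_sub, hcc, sub_self])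
    exact sub_eq_zero.1 this
  -- rank comparison
  let Ψr := Ψ.codRestrict T hΨT
  have hΨrinj : Function.Injective Ψr := fun c c' hcc => hΨinj (congrArg Subtype.val hcc)
  have r1 := LinearMap.lift_rank_le_of_injective Ψr hΨrinj
  have hcard : Fintype.card ((Fin n ⊕ Unit) × Fin (e + 1)) = (n+1)*(e+1) := by
    rw [Fintype.card_prod, Fintype.card_sum, Fintype.card_fin, Fintype.card_fin,
      Fintype.card_unit]
  have r2 : Module.rank k (((Fin n ⊕ Unit) × Fin (e + 1)) → k) = (((n+1)*(e+1) : ℕ) : Cardinal) := by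
    rw [rank_fun', hcard]
  have r3 : Module.rank k ↥T ≤ Cardinal.mk
      ↑(Set.range fun q' : Fin n × Fin (e + D + 1) => (Pi.single q'.1 (x ^ (q'.2 : ℕ)) : Fin n → R)) := by
    rw [hT]
    exact rank_span_le (R := k) _
  have r1' := toENat_mono' r1
  rw [Cardinal.toENat_lift, Cardinal.toENat_lift, r2] at r1'
  have r3' := toENat_mono' r3
  have r3b := toENat_mono'
    (Cardinal.mk_range_le_lift (f := fun q' : Fin n × Fin (e + D + 1) => (Pi.single q'.1 (x ^ (q'.2 : ℕ)) : Fin n → R)))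
  have hcard2 : Fintype.card (Fin n × Fin (e + D + 1)) = n * (e + D + 1) := by
    rw [Fintype.card_prod, Fintype.card_fin, Fintype.card_fin]
  rw [Cardinal.toENat_lift, Cardinal.toENat_lift,
    Cardinal.mk_fintype (Fin n × Fin (e + D + 1)), hcard2] at r3b
  rw [Cardinal.toENat_nat] at r1' r3b
  have r4 : (((n+1)*(e+1) : ℕ) : ℕ∞) ≤ ((n * (e + D + 1) : ℕ) : ℕ∞) :=
    le_trans r1' (le_trans r3' r3b)
  have r5 : ((n+1)*(e+1) : ℕ) ≤ (n * (e + D + 1) : ℕ) := by exact_mod_cast r4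
  rw [he] at r5
  have hfalse : (n+1)*(n*D+1) = n*(n*D + D + 1) + 1 := by ring
  omega

end infinite

end

/-- For `f : M(n,R) → ℕ ∪ {∞}`, `f A = dim_k (Rⁿ / Rⁿ A)`, one has
`f (A B) = f A + f B` (with the convention `m + ∞ = ∞ + m = ∞`). -/
theorem statement1 {k R : Type*} [Field k] [Ring R]
    (α : k →+* k) (δ : k → k) (ι : k →+* R) (x : R)
    (h : IsSkewPolynomialRing k R α δ ι x)
    {n : ℕ} (A B : Matrix (Fin n) (Fin n) R) :
    quotDim k ι (A * B) = quotDim k ι A + quotDim k ι B := by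
  classical
  by_cases hB : Function.Injective fun v : Fin n → R => Matrix.vecMul v B
  · exact quotDim_mul_inj ι A B hB
  · rw [Function.not_injective_iff] at hB
    obtain ⟨v1, v2, heq, hne⟩ := hB
    have hu0 : v1 - v2 ≠ 0 := sub_ne_zero.2 hne
    have huB : Matrix.vecMul (v1 - v2) B = 0 := by
      have hms := (Matrix.vecMulLinear B).map_sub v1 v2
      rw [show Matrix.vecMul (v1 - v2) B = Matrix.vecMulLinear B (v1 - v2) from rfl, hms]
      have heq' : Matrix.vecMul v1 B = Matrix.vecMul v2 B := heq
      rw [Matrix.vecMulLinear_apply, Matrix.vecMulLinear_apply, heq', sub_self]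
    have hBtop : quotDim k ι B = ⊤ := quotDim_eq_top_of_left_dep ι h B hu0 huB
    have hle := quotDim_le_mul ι A B
    rw [hBtop] at hle
    rw [hBtop, add_top]
    exact top_le_iff.1 hle
end

section
/- A matrix A ∈ M(n,R) satisfies dim_k(R^n / R^n A) = 0 if and only if A is invertible in M(n,R); that is, the kernel of the map f(A) = dim_k(R^n / R^n A), viewed as a monoid homomorphism (M(n,R), ·) → (ℕ ∪ {∞}, +), is exactly GL(n,R). -/
namespace SkewAux

variable {k R : Type*} [Field k] [Ring R] {α : k →+* k} {δ : k → k}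
  {ι : k →+* R} {x : R} (h : IsSkewPolynomialRing k R α δ ι x)

include h

/-- The representation as an additive equivalence. -/
noncomputable def E : (ℕ →₀ k) ≃+ R :=
  { Equiv.ofBijective _ h.repr_bijective with
    map_add' := fun p q => by
      show ((p + q).sum fun i a => ι a * x ^ i)
          = (p.sum fun i a => ι a * x ^ i) + q.sum fun i a => ι a * x ^ i
      exact Finsupp.sum_add_index' (fun i => by simp)
        (fun i a b => by rw [map_add, add_mul]) }

lemma E_apply (p : ℕ →₀ k) : E h p = p.sum fun i a => ι a * x ^ i := rfl

lemma E_single (i : ℕ) (a : k) : E h (Finsupp.single i a) = ι a * x ^ i := by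
  rw [E_apply, Finsupp.sum_single_index (by simp)]

lemma delta_zero : δ 0 = 0 := by
  have := h.delta_add 0 0; simpa using this.symm

lemma E_smul (a : k) (p : ℕ →₀ k) : E h (a • p) = ι a * E h p := by
  induction p using Finsupp.induction_linear with
  | zero => simp
  | add p q hp hq => rw [smul_add, map_add, map_add, hp, hq, mul_add]
  | single i b =>
      rw [Finsupp.smul_single, smul_eq_mul, E_single, E_single, map_mul, mul_assoc]


/-- Coefficient-level effect of left multiplication by `x`. -/
noncomputable def S (_h : IsSkewPolynomialRing k R α δ ι x) (p : ℕ →₀ k) : ℕ →₀ k :=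
  p.sum fun i b => Finsupp.single (i + 1) (α b) + Finsupp.single i (δ b)

lemma S_single (i : ℕ) (b : k) :
    S h (Finsupp.single i b) = Finsupp.single (i + 1) (α b) + Finsupp.single i (δ b) := by
  unfold S
  rw [Finsupp.sum_single_index (by simp [delta_zero h])]

lemma S_add (p q : ℕ →₀ k) : S h (p + q) = S h p + S h q := by
  unfold S
  refine Finsupp.sum_add_index' (fun i => by simp [delta_zero h]) fun i a b => ?_
  rw [map_add, h.delta_add, Finsupp.single_add, Finsupp.single_add]
  abel

lemma x_mul (p : ℕ →₀ k) : x * E h p = E h (S h p) := by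
  induction p using Finsupp.induction_linear with
  | zero => simp [S]
  | add p q hp hq => rw [map_add, mul_add, hp, hq, S_add, map_add]
  | single i b =>
      rw [E_single, S_single, map_add, E_single, E_single, ← mul_assoc, h.commute_x,
        add_mul, mul_assoc, ← pow_succ']

lemma S_apply_zero (p : ℕ →₀ k) : S h p 0 = δ (p 0) := by
  induction p using Finsupp.induction_linear with
  | zero => simp [S, delta_zero h]
  | add p q hp hq => rw [S_add, Finsupp.add_apply, hp, hq, Finsupp.add_apply, h.delta_add]
  | single i b =>
      rw [S_single, Finsupp.add_apply]
      simp only [Finsupp.single_apply]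
      split_ifs <;> simp_all [delta_zero h]

lemma S_apply_succ (p : ℕ →₀ k) (j : ℕ) : S h p (j + 1) = α (p j) + δ (p (j + 1)) := by
  induction p using Finsupp.induction_linear with
  | zero => simp [S, delta_zero h]
  | add p q hp hq =>
      rw [S_add, Finsupp.add_apply, hp, hq, Finsupp.add_apply, Finsupp.add_apply,
        h.delta_add, map_add α]
      abel
  | single i b =>
      rw [S_single, Finsupp.add_apply]
      simp only [Finsupp.single_apply]
      split_ifs <;> simp_all [delta_zero h]

omit h

/-- Degree of a finitely supported function. -/
noncomputable def degF (p : ℕ →₀ k) : ℕ := WithBot.unbotD 0 p.support.max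

lemma degF_spec {p : ℕ →₀ k} (hp : p ≠ 0) :
    p (degF p) ≠ 0 ∧ ∀ j, degF p < j → p j = 0 := by
  have hs : p.support.Nonempty := Finsupp.support_nonempty_iff.2 hp
  have hd : degF p = p.support.max' hs := by
    rw [degF, ← Finset.coe_max', WithBot.unbotD_coe]
  constructor
  · rw [hd]
    exact Finsupp.mem_support_iff.mp (Finset.max'_mem _ hs)
  · intro j hj
    by_contra hne
    exact absurd (Finset.le_max' _ _ (Finsupp.mem_support_iff.mpr hne)) (by rw [← hd]; omega)

lemma degF_eq {q : ℕ →₀ k} {c : ℕ} (hc : q c ≠ 0) (htail : ∀ j, c < j → q j = 0) :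
    degF q = c := by
  have hq : q ≠ 0 := fun e => hc (by simp [e])
  obtain ⟨h1, h2⟩ := degF_spec hq
  exact le_antisymm (not_lt.1 fun hlt => h1 (htail _ hlt)) (not_lt.1 fun hlt => hc (h2 _ hlt))

include h

/-- Coefficients of an element of `R`. -/
noncomputable def coeff (r : R) : ℕ →₀ k := (E h).symm r

/-- Degree of an element of `R`. -/
noncomputable def degR (r : R) : ℕ := degF (coeff h r)

lemma coeff_ne_zero {r : R} (hr : r ≠ 0) : coeff h r ≠ 0 := by
  simp [coeff, hr, (E h).symm.injective.eq_iff' (map_zero _)]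

lemma coeff_spec {r : R} (hr : r ≠ 0) :
    coeff h r (degR h r) ≠ 0 ∧ ∀ j, degR h r < j → coeff h r j = 0 :=
  degF_spec (coeff_ne_zero h hr)

lemma coeff_x_mul (r : R) : coeff h (x * r) = S h (coeff h r) := by
  unfold coeff
  conv_lhs => rw [show r = E h ((E h).symm r) from ((E h).apply_symm_apply r).symm]
  rw [x_mul, AddEquiv.symm_apply_apply]

lemma coeff_smul (a : k) (r : R) : coeff h (ι a * r) = a • coeff h r := by
  unfold coeff
  conv_lhs => rw [show r = E h ((E h).symm r) from ((E h).apply_symm_apply r).symm]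
  rw [← E_smul, AddEquiv.symm_apply_apply]

lemma lead_x_mul {r : R} (hr : r ≠ 0) :
    degR h (x * r) = degR h r + 1 ∧
      coeff h (x * r) (degR h r + 1) = α (coeff h r (degR h r)) := by
  obtain ⟨h1, h2⟩ := coeff_spec h hr
  set t := degR h r with ht
  have hval : coeff h (x * r) (t + 1) = α (coeff h r t) := by
    rw [coeff_x_mul, S_apply_succ, h2 (t + 1) (by omega), delta_zero h, add_zero]
  have hne : coeff h (x * r) (t + 1) ≠ 0 := by
    rw [hval]
    exact fun e => h1 (α.injective (by rw [e, map_zero]))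
  have htail : ∀ j, t + 1 < j → coeff h (x * r) j = 0 := by
    intro j hj
    obtain ⟨j', rfl⟩ : ∃ j', j = j' + 1 := ⟨j - 1, by omega⟩
    rw [coeff_x_mul, S_apply_succ, h2 j' (by omega), h2 (j' + 1) (by omega), map_zero,
      delta_zero h, add_zero]
  exact ⟨degF_eq hne htail, hval⟩

lemma lead_pow_mul {g : R} (hg : g ≠ 0) (s : ℕ) :
    x ^ s * g ≠ 0 ∧ degR h (x ^ s * g) = degR h g + s ∧
      coeff h (x ^ s * g) (degR h g + s) = α^[s] (coeff h g (degR h g)) := by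
  induction s with
  | zero =>
      rw [pow_zero, one_mul]
      exact ⟨hg, by simp, by simp⟩
  | succ s ih =>
      obtain ⟨hne, hdeg, hco⟩ := ih
      have hx : x ^ (s + 1) * g = x * (x ^ s * g) := by rw [pow_succ', mul_assoc]
      obtain ⟨hd2, hc2⟩ := lead_x_mul h hne
      refine ⟨?_, ?_, ?_⟩
      · intro e
        have h0 : (0 : k) = α (coeff h (x ^ s * g) (degR h (x ^ s * g))) := by
          rw [← hc2, ← hx, e]
          unfold coeff
          simp
        exact (coeff_spec h hne).1 (α.injective (by rw [← h0, map_zero]))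
      · rw [hx, hd2, hdeg, add_assoc]
      · rw [hx, show degR h g + (s + 1) = degR h (x ^ s * g) + 1 by omega, hc2, hdeg, hco,
          Function.iterate_succ_apply']


lemma coeff_sub (r s' : R) : coeff h (r - s') = coeff h r - coeff h s' := by
  unfold coeff; exact map_sub _ _ _

lemma division {g : R} (hg : g ≠ 0) (f : R) :
    ∃ q r, f = q * g + r ∧ (r = 0 ∨ degR h r < degR h g) := by
  obtain ⟨N, hN⟩ : ∃ N, degR h f ≤ N := ⟨degR h f, le_rfl⟩
  induction N using Nat.strong_induction_on generalizing f with
  | _ N IH =>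
  by_cases hf : f = 0
  · exact ⟨0, 0, by simp [hf], Or.inl rfl⟩
  by_cases hlt : degR h f < degR h g
  · exact ⟨0, f, by simp, Or.inr hlt⟩
  push_neg at hlt
  set d := degR h g with hd
  set m := degR h f with hm
  set s := m - d with hs
  obtain ⟨hpne, hpdeg, hpco⟩ := lead_pow_mul h hg s
  have hds : d + s = m := by omega
  have hdm : degR h (x ^ s * g) = m := by rw [hpdeg, ← hd, hds]
  set L := α^[s] (coeff h g d) with hL
  have hLne : L ≠ 0 := by
    rw [hL]
    intro e
    exact (coeff_spec h hg).1
      ((Function.Injective.iterate α.injective s)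
        (by rw [e, Function.iterate_fixed (map_zero α) s]))
  set c0 := coeff h f m * L⁻¹ with hc0
  set u := ι c0 * (x ^ s * g) with hu
  have hucoeff : coeff h u = c0 • coeff h (x ^ s * g) := coeff_smul h c0 _
  have hpco' : coeff h (x ^ s * g) m = L := by
    rw [← hds]; exact hpco
  have hum : coeff h u m = coeff h f m := by
    rw [hucoeff, Finsupp.smul_apply, smul_eq_mul, hpco', hc0, mul_assoc,
      inv_mul_cancel₀ hLne, mul_one]
  have hutail : ∀ j, m < j → coeff h u j = 0 := by
    intro j hj
    rw [hucoeff, Finsupp.smul_apply, (coeff_spec h hpne).2 j (hdm ▸ hj), smul_zero]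
  set f' := f - u with hf'
  have hf'co : ∀ j, m ≤ j → coeff h f' j = 0 := by
    intro j hj
    rw [hf', coeff_sub, Finsupp.sub_apply]
    rcases eq_or_lt_of_le hj with rfl | hlt'
    · rw [hum, sub_self]
    · rw [(coeff_spec h hf).2 j hlt', hutail j hlt', sub_zero]
  have hfu : f = f' + u := by rw [hf', sub_add_cancel]
  rcases eq_or_ne f' 0 with e | hf'ne
  · refine ⟨ι c0 * x ^ s, 0, ?_, Or.inl rfl⟩
    rw [mul_assoc, add_zero, ← hu, hfu, e, zero_add]
  · have hdlt : degR h f' < m := by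
      by_contra hge
      push_neg at hge
      exact (coeff_spec h hf'ne).1 (hf'co _ hge)
    obtain ⟨q', r, hqr, hr⟩ := IH (degR h f') (by omega) f' le_rfl
    refine ⟨q' + ι c0 * x ^ s, r, ?_, hr⟩
    rw [hfu, hqr, add_mul, mul_assoc, ← hu]
    abel

lemma principal (I : Submodule R R) : ∃ g, I = Submodule.span R {g} := by
  classical
  by_cases hb : ∀ f ∈ I, f = (0 : R)
  · exact ⟨0, by
      rw [Submodule.span_zero_singleton]
      exact eq_bot_iff.mpr fun f hf => (Submodule.mem_bot R).mpr (hb f hf)⟩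
  · push_neg at hb
    obtain ⟨f0, hf0I, hf0⟩ := hb
    have hex : ∃ n, ∃ g ∈ I, g ≠ 0 ∧ degR h g = n := ⟨degR h f0, f0, hf0I, hf0, rfl⟩
    obtain ⟨g, hgI, hgne, hgdeg⟩ := Nat.find_spec hex
    refine ⟨g, le_antisymm ?_ ?_⟩
    · intro f hf
      obtain ⟨q, r, hqr, hr⟩ := division h hgne f
      have hrI : r ∈ I := by
        have h1 : q * g ∈ I := by simpa [smul_eq_mul] using I.smul_mem q hgI
        have h2 : f - q * g ∈ I := I.sub_mem hf h1
        rwa [hqr, add_sub_cancel_left] at h2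
      rcases eq_or_ne r 0 with rfl | hrne
      · rw [add_zero] at hqr
        exact Submodule.mem_span_singleton.mpr ⟨q, by rw [smul_eq_mul]; exact hqr.symm⟩
      · exfalso
        rcases hr with rfl | hdr
        · exact hrne rfl
        · exact Nat.find_min hex (hgdeg ▸ hdr) ⟨r, hrI, hrne, rfl⟩
    · rw [Submodule.span_le, Set.singleton_subset_iff]
      exact hgI

theorem noeth : IsNoetherianRing R := by
  rw [isNoetherianRing_iff, isNoetherian_def]
  intro I
  obtain ⟨g, rfl⟩ := principal h I
  exact ⟨{g}, by simp⟩


lemma nontrivialR : Nontrivial R :=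
  ⟨E h (Finsupp.single 0 1), E h 0, fun e => by simpa using (E h).injective e⟩

end SkewAux

/-- `dim_k (Rⁿ / Rⁿ A) = 0` if and only if `A` is invertible in
`M(n,R)`; i.e. the kernel of the monoid homomorphism `f : (M(n,R), ·) → (ℕ ∪ {∞}, +)`
is exactly `GL(n,R)`. -/
theorem statement2 {k R : Type*} [Field k] [Ring R]
    (α : k →+* k) (δ : k → k) (ι : k →+* R) (x : R)
    (h : IsSkewPolynomialRing k R α δ ι x)
    {n : ℕ} (A : Matrix (Fin n) (Fin n) R) :
    quotDim k ι A = 0 ↔ IsUnit A := by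
  classical
  haveI hnt : Nontrivial R := SkewAux.nontrivialR h
  haveI hnoeth : IsNoetherianRing R := SkewAux.noeth h
  letI : Module k ((Fin n → R) ⧸ Submodule.span R (Set.range fun i => A i)) :=
    Module.compHom _ ι
  haveI : NoZeroSMulDivisors k
      ((Fin n → R) ⧸ Submodule.span R (Set.range fun i => A i)) := by
    constructor
    intro c v hcv
    rcases eq_or_ne c 0 with rfl | hc
    · exact Or.inl rfl
    · refine Or.inr ?_
      calc v = (c⁻¹ * c) • v := by rw [inv_mul_cancel₀ hc, one_smul]
        _ = c⁻¹ • (c • v) := mul_smul _ _ _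
        _ = 0 := by rw [hcv, smul_zero]
  unfold quotDim
  rw [Cardinal.toENat_eq_zero, rank_zero_iff, Submodule.Quotient.subsingleton_iff]
  have hr : Submodule.span R (Set.range fun i => A i)
      = LinearMap.range A.vecMulLinear := (range_vecMulLinear A).symm
  rw [hr, LinearMap.range_eq_top]
  constructor
  · intro hsurj
    have hinj : Function.Injective A.vecMulLinear :=
      IsNoetherian.injective_of_surjective_endomorphism A.vecMulLinear hsurj
    let eL := LinearEquiv.ofBijective A.vecMulLinear ⟨hinj, hsurj⟩
    let g := eL.symm
    let C : Matrix (Fin n) (Fin n) R := Matrix.of fun i j => g (Pi.single i 1) j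
    have hrow : ∀ i, C i = g (Pi.single i 1) := fun i => rfl
    have hvecC : ∀ w : Fin n → R, Matrix.vecMul w C = g w := by
      intro w
      have hw : w = ∑ i, w i • (Pi.single i 1 : Fin n → R) := by
        funext l
        simp [Finset.sum_apply, Pi.smul_apply, Pi.single_apply, smul_eq_mul]
      conv_rhs => rw [hw]
      rw [map_sum]
      simp only [map_smul]
      funext j
      simp [Matrix.vecMul, dotProduct, C, Finset.sum_apply, Pi.smul_apply,
        smul_eq_mul]
    have hCA : C * A = 1 := by
      ext i j
      have h1 : (C * A) i j = A.vecMulLinear (C i) j := by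
        simp [Matrix.mul_apply, Matrix.vecMulLinear_apply, Matrix.vecMul, dotProduct]
      have h2 : A.vecMulLinear (g (Pi.single i 1)) = Pi.single i 1 :=
        eL.apply_symm_apply _
      rw [h1, hrow i, h2]
      by_cases hij : i = j
      · subst hij; simp [Matrix.one_apply]
      · simp [Matrix.one_apply, hij, Pi.single_apply, Ne.symm hij]
    have hAC : A * C = 1 := by
      ext i j
      have h1 : (A * C) i j = Matrix.vecMul (A i) C j := by
        simp [Matrix.mul_apply, Matrix.vecMul, dotProduct]
      have h2 : A i = A.vecMulLinear (Pi.single i 1) := by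
        funext l
        simp [Matrix.vecMulLinear_apply, Matrix.vecMul, dotProduct, Pi.single_apply]
      have h3 : g (A.vecMulLinear (Pi.single i 1)) = Pi.single i 1 :=
        eL.symm_apply_apply _
      rw [h1, hvecC, h2, h3]
      by_cases hij : i = j
      · subst hij; simp [Matrix.one_apply]
      · simp [Matrix.one_apply, hij, Pi.single_apply, Ne.symm hij]
    exact ⟨⟨A, C, hAC, hCA⟩, rfl⟩
  · rintro ⟨u, rfl⟩ v
    refine ⟨Matrix.vecMul v u⁻¹.val, ?_⟩
    rw [Matrix.vecMulLinear_apply, Matrix.vecMul_vecMul, u.inv_mul, Matrix.vecMul_one]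
end
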